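/- The Lie algebra A_{4,8}^{-1} is a contraction of sl(2,ℝ) × ℝ. -/

import Mathlib

open Filter Topology

/-- `bg₀` (a bracket on `W`) is a contraction of `bg` (a bracket on `V`). -/
def IsContractionOf {V W : Type*} [AddCommGroup V] [Module ℝ V]
    [AddCommGroup W] [Module ℝ W] [TopologicalSpace W]
    (bg : V → V → V) (bg₀ : W → W → W) : Prop :=
  ∃ I : Set ℝ, (𝓝[I \ {0}] (0 : ℝ)).NeBot ∧
    ∃ C : ℝ → (W ≃ₗ[ℝ] V), ∀ x y : W,
      Tendsto (fun r => (C r).symm (bg (C r x) (C r y))) (𝓝[I \ {0}] (0 : ℝ)) (𝓝 (bg₀ x y))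

/-- The bracket of `sl(2,ℝ) × ℝ` on `Fin 4 → ℝ`: `[e₁,e₂] = e₁`, `[e₂,e₃] = e₃`,
`[e₁,e₃] = 2e₂`, with `e₄` central. -/
def sl2RBracket (x y : Fin 4 → ℝ) : Fin 4 → ℝ :=
  ![x 0 * y 1 - x 1 * y 0, 2 * (x 0 * y 2 - x 2 * y 0), x 1 * y 2 - x 2 * y 1, 0]

/-- The bracket of `A_{4,8}^{-1}` on `Fin 4 → ℝ`: `[e₂,e₃] = e₁`, `[e₂,e₄] = e₂`,
`[e₃,e₄] = -e₃`. -/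
def a481Bracket (x y : Fin 4 → ℝ) : Fin 4 → ℝ :=
  ![x 1 * y 2 - x 2 * y 1, x 1 * y 3 - x 3 * y 1, -(x 2 * y 3 - x 3 * y 2), 0]

/-- A nonvanishing modification of the identity. -/
noncomputable def sfun (r : ℝ) : ℝ := if r = 0 then 1 else r

lemma sfun_ne_zero (r : ℝ) : sfun r ≠ 0 := by
  unfold sfun; split
  · norm_num
  · assumption

/-- forward map of the contraction family -/
def Cfwd (s : ℝ) : (Fin 4 → ℝ) →ₗ[ℝ] (Fin 4 → ℝ) where
  toFun x := ![s * x 1, 2 * s * x 0 + x 3, x 2, x 3]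
  map_add' x y := by
    funext i; fin_cases i <;> simp <;> ring
  map_smul' c x := by
    funext i; fin_cases i <;> simp <;> ring

/-- backward map of the contraction family -/
noncomputable def Cbwd (s : ℝ) : (Fin 4 → ℝ) →ₗ[ℝ] (Fin 4 → ℝ) where
  toFun w := ![(w 1 - w 3) / (2 * s), w 0 / s, w 2, w 3]
  map_add' x y := by
    funext i; fin_cases i <;> simp <;> ring
  map_smul' c x := by
    funext i; fin_cases i <;> simp <;> ring

lemma Cfwd_comp_Cbwd {s : ℝ} (hs : s ≠ 0) :
    Cfwd s ∘ₗ Cbwd s = LinearMap.id := by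
  apply LinearMap.ext; intro x
  funext i
  fin_cases i <;> simp [Cfwd, Cbwd] <;> field_simp <;> ring

lemma Cbwd_comp_Cfwd {s : ℝ} (hs : s ≠ 0) :
    Cbwd s ∘ₗ Cfwd s = LinearMap.id := by
  apply LinearMap.ext; intro x
  funext i
  fin_cases i <;> simp [Cfwd, Cbwd] <;> field_simp

/-- the contraction family as linear equivalences -/
noncomputable def CE (r : ℝ) : (Fin 4 → ℝ) ≃ₗ[ℝ] (Fin 4 → ℝ) :=
  LinearEquiv.ofLinear (Cfwd (sfun r)) (Cbwd (sfun r))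
    (Cfwd_comp_Cbwd (sfun_ne_zero r)) (Cbwd_comp_Cfwd (sfun_ne_zero r))

/-- The Lie algebra `A_{4,8}^{-1}` is a contraction of `sl(2,ℝ) × ℝ`. -/
theorem a481_isContractionOf_sl2R : IsContractionOf sl2RBracket a481Bracket := by
  refine ⟨Set.univ, ?_, CE, ?_⟩
  · rw [← Set.compl_eq_univ_diff]
    exact inferInstance
  · intro x y
    set b : Fin 4 → ℝ :=
      ![0, 2 * (x 1 * y 0 - x 0 * y 1), 2 * (x 0 * y 2 - x 2 * y 0), 0] with hb
    have hcong : (fun r => (CE r).symm (sl2RBracket (CE r x) (CE r y)))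
        =ᶠ[𝓝[Set.univ \ {0}] (0:ℝ)] (fun r => a481Bracket x y + r • b) := by
      filter_upwards [self_mem_nhdsWithin] with r hr
      have hr0 : r ≠ 0 := by simpa using hr.2
      have hs : sfun r = r := if_neg hr0
      funext i
      fin_cases i <;>
        (try simp [CE, Cfwd, Cbwd, sl2RBracket, a481Bracket, hs, hb]) <;>
        (try field_simp) <;> (try ring)
    refine (Tendsto.congr' hcong.symm ?_)
    have hcont : Continuous fun r : ℝ => a481Bracket x y + r • b :=
      continuous_const.add (continuous_id.smul continuous_const)
    have h := (hcont.tendsto 0).mono_left (nhdsWithin_le_nhds (s := Set.univ \ {0}))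
    have h0 : a481Bracket x y + (0:ℝ) • b = a481Bracket x y := by
      rw [zero_smul, add_zero]
    rwa [h0] at h
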